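/- arXiv:2205.00647 — 5 statements merged into one kernel-verified Lean document; each statement's English description precedes it below -/
import Mathlib

section
/- Let z_1, ..., z_n ∈ R^d (n ≥ 2) satisfy z_1 + ... + z_n = 0 and ||z_1||² + ... + ||z_n||² = 1. Then max over pairs i,j of ||z_i - z_j||² ≥ 2/(n-1). -/
theorem stmt_2 (n d : ℕ) (hn : 2 ≤ n) (z : Fin n → EuclideanSpace ℝ (Fin d))
    (hsum : ∑ i, z i = 0) (hnorm : ∑ i, ‖z i‖ ^ 2 = 1) :
    ∃ i j : Fin n, ‖z i - z j‖ ^ 2 ≥ 2 / ((n : ℝ) - 1) := by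
  by_contra hcon
  push_neg at hcon
  have hn2 : (2:ℝ) ≤ (n:ℝ) := by exact_mod_cast hn
  have hn1 : (1:ℝ) ≤ (n:ℝ) - 1 := by linarith
  set c : ℝ := 2 / ((n:ℝ) - 1) with hc
  have hcpos : 0 < c := by positivity
  have expand : ∀ i j : Fin n, ‖z i - z j‖ ^ 2
      = ‖z i‖ ^ 2 + ‖z j‖ ^ 2 - 2 * (inner ℝ (z i) (z j) : ℝ) := by
    intro i j
    rw [norm_sub_sq_real]
    ring
  have hkey : ∑ i, ∑ j, ‖z i - z j‖ ^ 2 = 2 * n := by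
    have h1 : ∀ i : Fin n, ∑ j, (‖z i‖ ^ 2 + ‖z j‖ ^ 2 - 2 * (inner ℝ (z i) (z j) : ℝ))
        = n * ‖z i‖ ^ 2 + 1 := by
      intro i
      rw [Finset.sum_sub_distrib, Finset.sum_add_distrib, Finset.sum_const, hnorm,
        ← Finset.mul_sum, ← inner_sum, hsum, inner_zero_right]
      simp [Finset.card_univ, nsmul_eq_mul]
    simp_rw [expand, h1, Finset.sum_add_distrib, ← Finset.mul_sum, hnorm,
      Finset.sum_const, Finset.card_univ, Fintype.card_fin, nsmul_eq_mul]
    ring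
  have hlt : ∑ i, ∑ j, ‖z i - z j‖ ^ 2
      < ∑ i : Fin n, ∑ j : Fin n, (if i = j then 0 else c) := by
    rw [← Finset.sum_product', ← Finset.sum_product']
    apply Finset.sum_lt_sum
    · rintro ⟨i, j⟩ _
      by_cases h : i = j
      · simp [h]
      · simp only [h, if_false]
        exact le_of_lt (hcon i j)
    · refine ⟨(⟨0, by omega⟩, ⟨1, by omega⟩), Finset.mem_product.2 ⟨Finset.mem_univ _, Finset.mem_univ _⟩, ?_⟩
      have hne : (⟨0, by omega⟩ : Fin n) ≠ ⟨1, by omega⟩ := by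
        simp [Fin.ext_iff]
      simp only [hne, if_false]
      exact hcon _ _
  have hrhs : ∑ i : Fin n, ∑ j : Fin n, (if i = j then 0 else c) = n * ((n:ℝ) - 1) * c := by
    have : ∀ i : Fin n, ∑ j : Fin n, (if i = j then 0 else c) = n * c - c := by
      intro i
      have : ∑ j : Fin n, (if i = j then 0 else c)
          = ∑ j : Fin n, (c - if i = j then c else 0) := by
        apply Finset.sum_congr rfl
        intro j _
        by_cases h : i = j <;> simp [h]
      rw [this, Finset.sum_sub_distrib, Finset.sum_const, Finset.card_univ,
        Fintype.card_fin, Finset.sum_ite_eq]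
      simp [nsmul_eq_mul]
    simp_rw [this, Finset.sum_const, Finset.card_univ, Fintype.card_fin, nsmul_eq_mul]
    ring
  rw [hkey, hrhs, hc] at hlt
  have hne : (n:ℝ) - 1 ≠ 0 := by linarith
  have heq : (n:ℝ) * ((n:ℝ) - 1) * (2 / ((n:ℝ) - 1)) = 2 * n := by
    field_simp
  linarith
end

section
/- Let A ∈ R^{n×n} be doubly stochastic and let c_{ij} denote the (i,j)-entry of AᵀA. For X = [x_1,...,x_n]ᵀ ∈ R^{n×d}, define V(X) = Σ_{i=1}^n ||x_i − x̄||², where x̄ = (1/n)Σ_i x_i. Then V(AX) = V(X) − Σ_{i<j} c_{ij} ||x_i − x_j||². -/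
open Finset

theorem stmt_3 (n d : ℕ) (A : Matrix (Fin n) (Fin n) ℝ)
    (hpos : ∀ i j, 0 ≤ A i j)
    (hrow : ∀ i, ∑ j, A i j = 1) (hcol : ∀ j, ∑ i, A i j = 1)
    (x : Fin n → EuclideanSpace ℝ (Fin d))
    (V : (Fin n → EuclideanSpace ℝ (Fin d)) → ℝ)
    (hV : ∀ y : Fin n → EuclideanSpace ℝ (Fin d),
      V y = ∑ i, ‖y i - (n : ℝ)⁻¹ • ∑ k, y k‖ ^ 2) :
    V (fun i => ∑ j, A i j • x j) =
      V x - ∑ i, ∑ j ∈ Finset.univ.filter (fun j => i < j),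
        (A.transpose * A) i j * ‖x i - x j‖ ^ 2 := by
  classical
  set c : Fin n → Fin n → ℝ := fun i j => ∑ k, A k i * A k j with hc
  have hAtA : ∀ i j, (A.transpose * A) i j = c i j := by
    intro i j; simp [Matrix.mul_apply, Matrix.transpose_apply, hc]
  have hcsymm : ∀ i j, c i j = c j i := by
    intro i j; simp only [hc]; exact Finset.sum_congr rfl fun k _ => mul_comm _ _
  have hcrow : ∀ i, ∑ j, c i j = 1 := by
    intro i
    simp only [hc]
    rw [Finset.sum_comm]
    calc ∑ k, ∑ j, A k i * A k j = ∑ k, A k i * ∑ j, A k j := by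
          simp [Finset.mul_sum]
      _ = ∑ k, A k i := by simp [hrow]
      _ = 1 := hcol i
  -- swap lemma for strictly-upper-triangular sums
  have swap : ∀ g : Fin n → Fin n → ℝ,
      (∑ i, ∑ j ∈ Finset.univ.filter (fun j => i < j), g i j)
      = ∑ i, ∑ j ∈ Finset.univ.filter (fun j => j < i), g j i := by
    intro g
    simp_rw [Finset.sum_filter]
    exact Finset.sum_comm
  -- trichotomy decomposition of the full double sum
  have tri : ∀ g : Fin n → Fin n → ℝ,
      (∑ i, ∑ j, g i j)
      = (∑ i, ∑ j ∈ Finset.univ.filter (fun j => i < j), g i j)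
      + (∑ i, ∑ j ∈ Finset.univ.filter (fun j => j < i), g i j)
      + ∑ i, g i i := by
    intro g
    have hdiag : ∀ i, g i i = ∑ j, if j = i then g i j else 0 := by
      intro i
      rw [Finset.sum_ite_eq' Finset.univ i (fun j => g i j)]
      simp
    simp_rw [Finset.sum_filter, hdiag, ← Finset.sum_add_distrib]
    apply Finset.sum_congr rfl; intro i _
    apply Finset.sum_congr rfl; intro j _
    rcases lt_trichotomy i j with h | h | h
    · simp [h, asymm h, Ne.symm h.ne]
    · subst h; simp
    · simp [h, asymm h, h.ne]
  -- V in terms of sum of squared norms and the total sum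
  have hVform : ∀ y : Fin n → EuclideanSpace ℝ (Fin d),
      V y = (∑ i, ‖y i‖ ^ 2) - (n : ℝ)⁻¹ * ‖∑ k, y k‖ ^ 2 := by
    intro y
    rcases Nat.eq_zero_or_pos n with hn | hn
    · subst hn; simp [hV]
    · have hn0 : (n : ℝ) ≠ 0 := Nat.cast_ne_zero.mpr hn.ne'
      rw [hV]
      have expand : ∀ i, ‖y i - (n : ℝ)⁻¹ • ∑ k, y k‖ ^ 2
          = ‖y i‖ ^ 2 - 2 * (n : ℝ)⁻¹ * (inner ℝ (y i) (∑ k, y k) : ℝ)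
            + (n : ℝ)⁻¹ ^ 2 * ‖∑ k, y k‖ ^ 2 := by
        intro i
        rw [norm_sub_sq_real, real_inner_smul_right, norm_smul]
        rw [mul_pow]
        have : ‖(n : ℝ)⁻¹‖ ^ 2 = (n : ℝ)⁻¹ ^ 2 := by
          rw [Real.norm_eq_abs, sq_abs]
        rw [this]; ring
      simp_rw [expand]
      rw [Finset.sum_add_distrib, Finset.sum_sub_distrib, ← Finset.mul_sum,
        ← Finset.mul_sum, Finset.sum_const, Finset.card_univ, Fintype.card_fin,
        ← sum_inner, real_inner_self_eq_norm_sq]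
      rw [nsmul_eq_mul]
      field_simp
      ring
  -- the total sum is preserved
  have hmean : (∑ i, ∑ j, A i j • x j) = ∑ k, x k := by
    rw [Finset.sum_comm]
    have : ∀ j, (∑ i, A i j • x j) = x j := by
      intro j
      rw [← Finset.sum_smul, hcol j, one_smul]
    simp_rw [this]
  -- sum of squared norms of AX
  have hSA : (∑ i, ‖∑ j, A i j • x j‖ ^ 2) = ∑ i, ∑ j, c i j * (inner ℝ (x i) (x j) : ℝ) := by
    have step : ∀ i, ‖∑ j, A i j • x j‖ ^ 2
        = ∑ j, ∑ k, A i j * A i k * (inner ℝ (x j) (x k) : ℝ) := by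
      intro i
      rw [← real_inner_self_eq_norm_sq, sum_inner]
      apply Finset.sum_congr rfl; intro j _
      rw [real_inner_smul_left, inner_sum, Finset.mul_sum]
      apply Finset.sum_congr rfl; intro k _
      rw [real_inner_smul_right]; ring
    simp_rw [step]
    rw [Finset.sum_comm]
    apply Finset.sum_congr rfl; intro j _
    rw [Finset.sum_comm]
    apply Finset.sum_congr rfl; intro k _
    simp only [hc]
    rw [Finset.sum_mul]
  -- main algebraic identity
  have key : (∑ i, ∑ j, c i j * (inner ℝ (x i) (x j) : ℝ))
      = (∑ i, ‖x i‖ ^ 2)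
        - ∑ i, ∑ j ∈ Finset.univ.filter (fun j => i < j), c i j * ‖x i - x j‖ ^ 2 := by
    -- expand the subtracted term
    have hT : (∑ i, ∑ j ∈ Finset.univ.filter (fun j => i < j), c i j * ‖x i - x j‖ ^ 2)
        = (∑ i, ∑ j ∈ Finset.univ.filter (fun j => i < j), c i j * ‖x i‖ ^ 2)
        + (∑ i, ∑ j ∈ Finset.univ.filter (fun j => i < j), c i j * ‖x j‖ ^ 2)
        - 2 * ∑ i, ∑ j ∈ Finset.univ.filter (fun j => i < j),
            c i j * (inner ℝ (x i) (x j) : ℝ) := by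
      rw [Finset.mul_sum, ← Finset.sum_add_distrib, ← Finset.sum_sub_distrib]
      apply Finset.sum_congr rfl; intro i _
      rw [Finset.mul_sum, ← Finset.sum_add_distrib, ← Finset.sum_sub_distrib]
      apply Finset.sum_congr rfl; intro j _
      rw [norm_sub_sq_real]; ring
    -- upper = lower for the two relevant integrands
    have hU2 : (∑ i, ∑ j ∈ Finset.univ.filter (fun j => i < j), c i j * ‖x j‖ ^ 2)
        = ∑ i, ∑ j ∈ Finset.univ.filter (fun j => j < i), c i j * ‖x i‖ ^ 2 := by
      rw [swap (fun i j => c i j * ‖x j‖ ^ 2)]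
      apply Finset.sum_congr rfl; intro i _
      apply Finset.sum_congr rfl; intro j _
      rw [hcsymm]
    have hP2 : (∑ i, ∑ j ∈ Finset.univ.filter (fun j => i < j),
          c i j * (inner ℝ (x i) (x j) : ℝ))
        = ∑ i, ∑ j ∈ Finset.univ.filter (fun j => j < i),
            c i j * (inner ℝ (x i) (x j) : ℝ) := by
      rw [swap (fun i j => c i j * (inner ℝ (x i) (x j) : ℝ))]
      apply Finset.sum_congr rfl; intro i _
      apply Finset.sum_congr rfl; intro j _
      rw [hcsymm, real_inner_comm]
    have tri1 := tri (fun i j => c i j * ‖x i‖ ^ 2)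
    have tri2 := tri (fun i j => c i j * (inner ℝ (x i) (x j) : ℝ))
    have hfull1 : (∑ i, ∑ j, c i j * ‖x i‖ ^ 2) = ∑ i, ‖x i‖ ^ 2 := by
      apply Finset.sum_congr rfl; intro i _
      rw [← Finset.sum_mul, hcrow, one_mul]
    have hdiag2 : (∑ i, c i i * (inner ℝ (x i) (x i) : ℝ)) = ∑ i, c i i * ‖x i‖ ^ 2 := by
      apply Finset.sum_congr rfl; intro i _
      rw [real_inner_self_eq_norm_sq]
    simp only [hfull1, hdiag2] at tri1 tri2 ⊢
    linarith [tri1, tri2, hT, hU2, hP2]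
  -- put it together
  rw [hVform, hVform, hmean]
  simp_rw [hAtA]
  rw [hSA, key]
  ring
end

section
/- Let A ∈ R^{n×n} be doubly stochastic. Then AᵀA is symmetric, stochastic, and can be written as AᵀA = I − Σ_{i<j} c_{ij}(b_i − b_j)(b_i − b_j)ᵀ, where c_{ij} is the (i,j)-entry of AᵀA and b_i are the standard basis vectors of R^n. -/
-- sum over i<j of symmetric f with zero diagonal equals half the full sum
lemma aux_half {n : ℕ} (f : Fin n → Fin n → ℝ)
    (hsymm : ∀ i j, f i j = f j i) (hdiag : ∀ i, f i i = 0) :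
    ∑ i, ∑ j ∈ Finset.univ.filter (fun j => i < j), f i j
      = (∑ i, ∑ j, f i j) / 2 := by
  have key : ∑ i, ∑ j, f i j
      = (∑ i, ∑ j ∈ Finset.univ.filter (fun j => i < j), f i j)
        + (∑ i, ∑ j ∈ Finset.univ.filter (fun j => i < j), f i j) := by
    calc ∑ i, ∑ j, f i j
        = ∑ i, ((∑ j ∈ Finset.univ.filter (fun j => i < j), f i j)
            + ∑ j ∈ Finset.univ.filter (fun j => ¬ i < j), f i j) := by
          refine Finset.sum_congr rfl fun i _ => ?_
          exact (Finset.sum_filter_add_sum_filter_not _ _ _).symm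
      _ = (∑ i, ∑ j ∈ Finset.univ.filter (fun j => i < j), f i j)
            + ∑ i, ∑ j ∈ Finset.univ.filter (fun j => ¬ i < j), f i j := by
          rw [Finset.sum_add_distrib]
      _ = (∑ i, ∑ j ∈ Finset.univ.filter (fun j => i < j), f i j)
            + (∑ i, ∑ j ∈ Finset.univ.filter (fun j => i < j), f i j) := by
          congr 1
          -- ∑ i, ∑_{j ≤ i} f i j = ∑ i, ∑_{j < i} f i j  (diag zero)
          have h1 : ∀ i : Fin n, ∑ j ∈ Finset.univ.filter (fun j => ¬ i < j), f i j
              = ∑ j ∈ Finset.univ.filter (fun j => j < i), f i j := by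
            intro i
            have : Finset.univ.filter (fun j => ¬ i < j)
                = insert i (Finset.univ.filter (fun j : Fin n => j < i)) := by
              ext j
              simp [not_lt, le_iff_lt_or_eq, or_comm, eq_comm]
            rw [this, Finset.sum_insert (by simp), hdiag]
            ring
          simp only [h1]
          -- swap: ∑ i, ∑_{j<i} f i j = ∑ j, ∑_{i<j}? use sum_filter + sum_comm
          calc ∑ i, ∑ j ∈ Finset.univ.filter (fun j => j < i), f i j
              = ∑ i, ∑ j, if j < i then f i j else 0 := by
                simp [Finset.sum_filter]
            _ = ∑ j, ∑ i, if j < i then f i j else 0 := Finset.sum_comm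
            _ = ∑ j, ∑ i ∈ Finset.univ.filter (fun i => j < i), f i j := by
                simp [Finset.sum_filter]
            _ = ∑ i, ∑ j ∈ Finset.univ.filter (fun j => i < j), f i j := by
                refine Finset.sum_congr rfl fun i _ => Finset.sum_congr rfl fun j _ => hsymm j i
  linarith [key]

set_option maxHeartbeats 1600000 in
theorem stmt_4 (n : ℕ) (A : Matrix (Fin n) (Fin n) ℝ)
    (hpos : ∀ i j, 0 ≤ A i j)
    (hrow : ∀ i, ∑ j, A i j = 1) (hcol : ∀ j, ∑ i, A i j = 1) :
    (A.transpose * A).IsSymm ∧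
    (∀ i j, 0 ≤ (A.transpose * A) i j) ∧
    (∀ i, ∑ j, (A.transpose * A) i j = 1) ∧
    A.transpose * A =
      1 - ∑ i, ∑ j ∈ Finset.univ.filter (fun j => i < j),
        (A.transpose * A) i j •
          Matrix.vecMulVec (Pi.single i 1 - Pi.single j 1)
            (Pi.single i 1 - Pi.single j 1) := by
  set M := A.transpose * A with hMdef
  have hMe : ∀ i j, M i j = ∑ k, A k i * A k j := by
    intro i j
    simp [hMdef, Matrix.mul_apply, Matrix.transpose_apply]
  have hsym : ∀ i j, M i j = M j i := by
    intro i j; simp [hMe, mul_comm]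
  have hrowM : ∀ i, ∑ j, M i j = 1 := by
    intro i
    calc ∑ j, M i j = ∑ k, A k i * ∑ j, A k j := by
          simp [hMe, Finset.mul_sum]; exact Finset.sum_comm
      _ = 1 := by simp [hrow, hcol]
  refine ⟨?_, ?_, hrowM, ?_⟩
  · unfold Matrix.IsSymm
    ext i j
    simp [Matrix.transpose_apply, hsym i j]
  · intro i j
    rw [hMe]
    exact Finset.sum_nonneg fun k _ => mul_nonneg (hpos k i) (hpos k j)
  · ext p q
    rw [Matrix.sub_apply, Matrix.one_apply, Matrix.sum_apply]
    simp only [Matrix.sum_apply, Matrix.smul_apply, Matrix.vecMulVec_apply, smul_eq_mul]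
    have hfs : ∀ i j : Fin n, M i j * ((Pi.single i 1 - Pi.single j 1 : Fin n → ℝ) p *
          (Pi.single i 1 - Pi.single j 1 : Fin n → ℝ) q)
        = M j i * ((Pi.single j 1 - Pi.single i 1 : Fin n → ℝ) p *
          (Pi.single j 1 - Pi.single i 1 : Fin n → ℝ) q) := by
      intro i j
      simp only [Pi.sub_apply]
      rw [hsym i j]; ring
    have hfd : ∀ i : Fin n, M i i * ((Pi.single i 1 - Pi.single i 1 : Fin n → ℝ) p *
          (Pi.single i 1 - Pi.single i 1 : Fin n → ℝ) q) = 0 := by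
      intro i; simp
    have key : ∑ i, ∑ j ∈ Finset.univ.filter (fun j => i < j),
          M i j * ((Pi.single i 1 - Pi.single j 1 : Fin n → ℝ) p *
            (Pi.single i 1 - Pi.single j 1 : Fin n → ℝ) q)
        = (∑ i, ∑ j, M i j * ((Pi.single i 1 - Pi.single j 1 : Fin n → ℝ) p *
            (Pi.single i 1 - Pi.single j 1 : Fin n → ℝ) q)) / 2 :=
      aux_half _ hfs hfd
    rw [key]
    have hexp : ∀ i j : Fin n,
        M i j * ((Pi.single i 1 - Pi.single j 1 : Fin n → ℝ) p *
          (Pi.single i 1 - Pi.single j 1 : Fin n → ℝ) q)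
        = ((if p = i then (if q = i then M i j else 0) else 0)
            - (if p = i then (if q = j then M i j else 0) else 0))
          - ((if p = j then (if q = i then M i j else 0) else 0)
            - (if p = j then (if q = j then M i j else 0) else 0)) := by
      intro i j
      simp only [Pi.sub_apply, Pi.single_apply]
      split_ifs <;> ring
    have T1 : ∑ i : Fin n, ∑ j : Fin n, (if p = i then (if q = i then M i j else 0) else 0)
        = if p = q then 1 else 0 := by
      have : ∀ i : Fin n, ∑ j : Fin n, (if p = i then (if q = i then M i j else 0) else 0)
          = (if p = i then (if q = i then (1:ℝ) else 0) else 0) := by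
        intro i
        by_cases h1 : p = i <;> by_cases h2 : q = i <;> simp [h1, h2, hrowM]
      rw [Finset.sum_congr rfl fun i _ => this i, Finset.sum_ite_eq]
      simp only [Finset.mem_univ, if_true]
      by_cases h : p = q
      · simp [h]
      · simp [h, Ne.symm h]
    have T2 : ∑ i : Fin n, ∑ j : Fin n, (if p = i then (if q = j then M i j else 0) else 0)
        = M p q := by
      have : ∀ i : Fin n, ∑ j : Fin n, (if p = i then (if q = j then M i j else 0) else 0)
          = (if p = i then M i q else 0) := by
        intro i
        by_cases h : p = i
        · simp only [if_pos h]; rw [Finset.sum_ite_eq]; simp only [Finset.mem_univ, if_true]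
        · simp only [if_neg h, ite_self, Finset.sum_const_zero]
      rw [Finset.sum_congr rfl fun i _ => this i, Finset.sum_ite_eq]
      simp only [Finset.mem_univ, if_true]
    have T3 : ∑ i : Fin n, ∑ j : Fin n, (if p = j then (if q = i then M i j else 0) else 0)
        = M p q := by
      have : ∀ i : Fin n, ∑ j : Fin n, (if p = j then (if q = i then M i j else 0) else 0)
          = (if q = i then M i p else 0) := by
        intro i
        by_cases h : q = i
        · simp only [if_pos h]; rw [Finset.sum_ite_eq]; simp only [Finset.mem_univ, if_true]
        · simp only [if_neg h, ite_self, Finset.sum_const_zero]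
      rw [Finset.sum_congr rfl fun i _ => this i, Finset.sum_ite_eq]
      simp only [Finset.mem_univ, if_true]
      exact (hsym q p)
    have T4 : ∑ i : Fin n, ∑ j : Fin n, (if p = j then (if q = j then M i j else 0) else 0)
        = if p = q then 1 else 0 := by
      have : ∀ i : Fin n, ∑ j : Fin n, (if p = j then (if q = j then M i j else 0) else 0)
          = (if p = q then M i p else 0) := by
        intro i
        by_cases h : p = q
        · subst h
          simp only [if_pos rfl]
          rw [Finset.sum_ite_eq]; simp only [Finset.mem_univ, if_true]
        · rw [Finset.sum_eq_zero, if_neg h]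
          intro j _
          by_cases h1 : p = j
          · have h2 : ¬ q = j := fun hq => h (h1.trans hq.symm)
            simp only [if_pos h1, if_neg h2]
          · simp only [if_neg h1]
      rw [Finset.sum_congr rfl fun i _ => this i]
      by_cases h : p = q
      · subst h
        simp only [eq_self_iff_true, if_true]
        have : ∑ i, M i p = ∑ i, M p i :=
          Finset.sum_congr rfl fun i _ => hsym i p
        rw [this, hrowM]
      · simp [h]
    have hfull : ∑ i, ∑ j, M i j * ((Pi.single i 1 - Pi.single j 1 : Fin n → ℝ) p *
          (Pi.single i 1 - Pi.single j 1 : Fin n → ℝ) q)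
        = ((if p = q then 1 else 0) - M p q) - (M p q - (if p = q then 1 else 0)) := by
      calc _ = ∑ i : Fin n, ∑ j : Fin n,
            (((if p = i then (if q = i then M i j else 0) else 0)
              - (if p = i then (if q = j then M i j else 0) else 0))
            - ((if p = j then (if q = i then M i j else 0) else 0)
              - (if p = j then (if q = j then M i j else 0) else 0))) :=
            Finset.sum_congr rfl fun i _ => Finset.sum_congr rfl fun j _ => hexp i j
        _ = _ := by
            simp only [Finset.sum_sub_distrib]
            rw [T1, T2, T3, T4]
    rw [hfull]
    ring
end

section
/- Let G = ([n], E) be a connected graph, n ≥ 2, X = [x_1,...,x_n]ᵀ ∈ R^{n×d}, and V(X) = Σ_i ||x_i − x̄||² with x̄ the mean of the x_i. Let {i*, j*} ∈ E be an edge maximizing ||x_i − x_j|| over all edges. Then ||x_{i*} − x_{j*}||² ≥ (2 / ((n−1) · diam(G)²)) · V(X). -/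
open Finset

lemma walk_norm_bound {n d : ℕ} (G : SimpleGraph (Fin n))
    (x : Fin n → EuclideanSpace ℝ (Fin d)) (M : ℝ)
    (hmax : ∀ i j : Fin n, G.Adj i j → ‖x i - x j‖ ≤ M) :
    ∀ {i j : Fin n} (p : G.Walk i j), ‖x i - x j‖ ≤ p.length * M := by
  intro i j p
  induction p with
  | nil => simp
  | cons h p ih =>
    rename_i u v w
    calc ‖x u - x w‖ ≤ ‖x u - x v‖ + ‖x v - x w‖ := by
          have := dist_triangle (x u) (x v) (x w)
          simpa [dist_eq_norm] using this
      _ ≤ M + p.length * M := add_le_add (hmax _ _ h) ih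
      _ = (SimpleGraph.Walk.cons h p).length * M := by
        simp [SimpleGraph.Walk.length_cons]; ring

theorem stmt_7 (n d : ℕ) (hn : 2 ≤ n) (G : SimpleGraph (Fin n)) (hG : G.Connected)
    (x : Fin n → EuclideanSpace ℝ (Fin d)) (istar jstar : Fin n)
    (hadj : G.Adj istar jstar)
    (hmax : ∀ i j : Fin n, G.Adj i j → ‖x i - x j‖ ≤ ‖x istar - x jstar‖) :
    ‖x istar - x jstar‖ ^ 2 ≥
      2 / (((n : ℝ) - 1) * (G.diam : ℝ) ^ 2) *
        ∑ i, ‖x i - (n : ℝ)⁻¹ • ∑ k, x k‖ ^ 2 := by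
  classical
  open scoped RealInnerProductSpace in
  set M := ‖x istar - x jstar‖ with hMdef
  have hM0 : 0 ≤ M := norm_nonneg _
  set c := (n:ℝ)⁻¹ • ∑ k, x k with hcdef
  set V := ∑ i, ‖x i - c‖ ^ 2 with hVdef
  have hV0 : 0 ≤ V := Finset.sum_nonneg fun i _ => by positivity
  have hn0 : (0:ℝ) < n := by positivity
  have hnne : (n:ℝ) ≠ 0 := ne_of_gt hn0
  by_cases hD : G.diam = 0
  · rw [hD]
    simp only [Nat.cast_zero]
    rw [zero_pow (by norm_num), mul_zero, div_zero, zero_mul]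
    positivity
  · have hne : G.ediam ≠ ⊤ := SimpleGraph.ediam_ne_top_of_diam_ne_zero hD
    set D : ℝ := (G.diam : ℝ) with hDdef
    have hD1 : (1:ℝ) ≤ D := by
      rw [hDdef]
      exact_mod_cast Nat.one_le_iff_ne_zero.mpr hD
    -- pairwise distance bound
    have key : ∀ i j : Fin n, ‖x i - x j‖ ≤ D * M := by
      intro i j
      obtain ⟨p, hp⟩ := (hG.preconnected i j).exists_walk_length_eq_dist
      calc ‖x i - x j‖ ≤ p.length * M := walk_norm_bound G x M hmax p
        _ = (G.dist i j : ℝ) * M := by rw [hp]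
        _ ≤ D * M := by
            apply mul_le_mul_of_nonneg_right _ hM0
            rw [hDdef]; exact_mod_cast SimpleGraph.dist_le_diam hne
    -- variance identity
    have hy : ∑ i, (x i - c) = 0 := by
      rw [Finset.sum_sub_distrib, Finset.sum_const, Finset.card_univ, Fintype.card_fin,
        hcdef, ← Nat.cast_smul_eq_nsmul ℝ, smul_smul, mul_inv_cancel₀ hnne, one_smul, sub_self]
    have hvar : ∑ i, ∑ j, ‖x i - x j‖ ^ 2 = 2 * n * V := by
      have step : ∀ i j : Fin n, ‖x i - x j‖ ^ 2
          = ‖x i - c‖ ^ 2 - 2 * ⟪x i - c, x j - c⟫ + ‖x j - c‖ ^ 2 := by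
        intro i j
        have hxy : x i - x j = (x i - c) - (x j - c) := by abel
        rw [hxy, norm_sub_sq_real]
      calc ∑ i, ∑ j, ‖x i - x j‖ ^ 2
          = ∑ i, ∑ j, (‖x i - c‖ ^ 2 - 2 * ⟪x i - c, x j - c⟫ + ‖x j - c‖ ^ 2) := by
            exact Finset.sum_congr rfl fun i _ => Finset.sum_congr rfl fun j _ => step i j
        _ = ∑ i, ((n : ℝ) * ‖x i - c‖ ^ 2 - 2 * ⟪x i - c, ∑ j, (x j - c)⟫ + V) := by
            refine Finset.sum_congr rfl fun i _ => ?_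
            rw [Finset.sum_add_distrib, Finset.sum_sub_distrib, Finset.sum_const,
              Finset.card_univ, Fintype.card_fin, ← Finset.mul_sum, ← inner_sum, hVdef,
              nsmul_eq_mul]
        _ = 2 * n * V := by
            simp only [hy, inner_zero_right, mul_zero, sub_zero]
            rw [Finset.sum_add_distrib, ← Finset.mul_sum, Finset.sum_const,
              Finset.card_univ, Fintype.card_fin, nsmul_eq_mul, ← hVdef]
            ring
    -- sum bound
    have hsum : ∑ i, ∑ j, ‖x i - x j‖ ^ 2 ≤ n * (((n:ℝ) - 1) * (D * M) ^ 2) := by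
      have inner_bd : ∀ i : Fin n, ∑ j, ‖x i - x j‖ ^ 2 ≤ ((n:ℝ) - 1) * (D * M) ^ 2 := by
        intro i
        rw [← Finset.add_sum_erase Finset.univ _ (Finset.mem_univ i), sub_self, norm_zero]
        rw [zero_pow (by norm_num), zero_add]
        calc ∑ j ∈ Finset.univ.erase i, ‖x i - x j‖ ^ 2
            ≤ ∑ _j ∈ Finset.univ.erase i, (D * M) ^ 2 := by
              refine Finset.sum_le_sum fun j _ => ?_
              have := key i j
              have h0 : 0 ≤ ‖x i - x j‖ := norm_nonneg _
              nlinarith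
          _ = ((n:ℝ) - 1) * (D * M) ^ 2 := by
              rw [Finset.sum_const, Finset.card_erase_of_mem (Finset.mem_univ i),
                Finset.card_univ, Fintype.card_fin, nsmul_eq_mul]
              have : ((n - 1 : ℕ) : ℝ) = (n:ℝ) - 1 := by
                have : 1 ≤ n := le_trans (by norm_num) hn
                push_cast [this]; ring
              rw [this]
      calc ∑ i, ∑ j, ‖x i - x j‖ ^ 2 ≤ ∑ _i : Fin n, ((n:ℝ) - 1) * (D * M) ^ 2 :=
            Finset.sum_le_sum fun i _ => inner_bd i
        _ = n * (((n:ℝ) - 1) * (D * M) ^ 2) := by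
            rw [Finset.sum_const, Finset.card_univ, Fintype.card_fin, nsmul_eq_mul]
    -- conclude
    have hpos : 0 < ((n:ℝ) - 1) * D ^ 2 := by
      have h1 : (2:ℝ) ≤ n := by exact_mod_cast hn
      nlinarith
    rw [ge_iff_le, div_mul_eq_mul_div, div_le_iff₀ hpos]
    have h2 : 2 * (n:ℝ) * V ≤ n * (((n:ℝ) - 1) * (D * M) ^ 2) := hvar ▸ hsum
    nlinarith
end

section
/- Let G be a connected graph on n ≥ 2 vertices, X = [x_1,...,x_n]ᵀ ∈ R^{n×d}, and A ∈ R^{n×n} a doubly stochastic matrix such that (AᵀA)_{i*j*} ≥ δ > 0, where {i*, j*} is an edge of G maximizing ||x_i − x_j|| over edges. Then V(AX) ≤ (1 − 2δ/((n−1)·diam(G)²)) · V(X), where V(X) = Σ_i ||x_i − x̄||². -/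
open Finset

set_option maxHeartbeats 1000000 in
theorem stmt_8 (n d : ℕ) (hn : 2 ≤ n) (G : SimpleGraph (Fin n)) (hG : G.Connected)
    (x : Fin n → EuclideanSpace ℝ (Fin d)) (A : Matrix (Fin n) (Fin n) ℝ)
    (hpos : ∀ i j, 0 ≤ A i j)
    (hrow : ∀ i, ∑ j, A i j = 1) (hcol : ∀ j, ∑ i, A i j = 1)
    (istar jstar : Fin n) (hadj : G.Adj istar jstar)
    (hmax : ∀ i j : Fin n, G.Adj i j → ‖x i - x j‖ ≤ ‖x istar - x jstar‖)
    (δ : ℝ) (hδ : 0 < δ) (hAδ : δ ≤ (A.transpose * A) istar jstar)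
    (V : (Fin n → EuclideanSpace ℝ (Fin d)) → ℝ)
    (hV : ∀ y : Fin n → EuclideanSpace ℝ (Fin d),
      V y = ∑ i, ‖y i - (n : ℝ)⁻¹ • ∑ k, y k‖ ^ 2) :
    V (fun i => ∑ j, A i j • x j) ≤
      (1 - 2 * δ / (((n : ℝ) - 1) * (G.diam : ℝ) ^ 2)) * V x := by
  classical
  haveI : Nonempty (Fin n) := ⟨⟨0, by omega⟩⟩
  have hn0 : (0:ℝ) < (n:ℝ) := by exact_mod_cast Nat.lt_of_lt_of_le Nat.zero_lt_two hn
  have hn1 : (1:ℝ) ≤ (n:ℝ) - 1 := by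
    have : (2:ℝ) ≤ (n:ℝ) := by exact_mod_cast hn
    linarith
  have hnne : (n:ℝ) ≠ 0 := ne_of_gt hn0
  set E : ℝ := ‖x istar - x jstar‖ with hE
  have hEnn : 0 ≤ E := norm_nonneg _
  -- diameter facts
  have hne_top : G.ediam ≠ ⊤ := by
    obtain ⟨u, v, huv⟩ := SimpleGraph.exists_edist_eq_ediam_of_finite (G := G)
    rw [← huv]
    exact SimpleGraph.edist_ne_top_iff_reachable.mpr (hG.preconnected u v)
  have hdiam1 : 1 ≤ G.diam := by
    have h1 : 0 < G.dist istar jstar := hG.pos_dist_of_ne hadj.ne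
    have h2 := SimpleGraph.dist_le_diam (G := G) hne_top (u := istar) (v := jstar)
    omega
  set D : ℝ := (G.diam : ℝ) with hD
  have hD1 : (1:ℝ) ≤ D := by rw [hD]; exact_mod_cast hdiam1
  -- walk bound
  have hwalk : ∀ (i j : Fin n) (p : G.Walk i j), ‖x i - x j‖ ≤ (p.length : ℝ) * E := by
    intro i j p
    induction p with
    | nil => simp
    | @cons u v w h p ih =>
      have htri : ‖x u - x w‖ ≤ ‖x u - x v‖ + ‖x v - x w‖ := by
        have := dist_triangle (x u) (x v) (x w)
        simpa [dist_eq_norm] using this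
      have h1 : ‖x u - x v‖ ≤ E := hmax u v h
      have hlen : ((SimpleGraph.Walk.cons h p).length : ℝ) = (p.length : ℝ) + 1 := by
        push_cast [SimpleGraph.Walk.length_cons]; ring
      rw [hlen]
      nlinarith [ih]
  have hpair : ∀ i j : Fin n, ‖x i - x j‖ ≤ D * E := by
    intro i j
    obtain ⟨p, hp⟩ := hG.exists_walk_length_eq_dist i j
    calc ‖x i - x j‖ ≤ (p.length : ℝ) * E := hwalk i j p
      _ = (G.dist i j : ℝ) * E := by rw [hp]
      _ ≤ D * E := by
          apply mul_le_mul_of_nonneg_right _ hEnn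
          rw [hD]
          exact_mod_cast SimpleGraph.dist_le_diam hne_top
  -- abbreviations
  set S : EuclideanSpace ℝ (Fin d) := ∑ k, x k with hS
  set y : Fin n → EuclideanSpace ℝ (Fin d) := fun i => ∑ j, A i j • x j with hy
  have hsumy : ∑ i, y i = S := by
    rw [hy, hS, Finset.sum_comm]
    apply Finset.sum_congr rfl
    intro j _
    rw [← Finset.sum_smul, hcol j, one_smul]
  -- variance formula
  have hVform : ∀ z : Fin n → EuclideanSpace ℝ (Fin d), (∑ k, z k) = S →
      V z = ∑ i, ‖z i‖ ^ 2 - (n:ℝ)⁻¹ * ‖S‖ ^ 2 := by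
    intro z hz
    rw [hV z, hz]
    have expand : ∀ i : Fin n, ‖z i - (n:ℝ)⁻¹ • S‖ ^ 2
        = ‖z i‖ ^ 2 - 2 * inner ℝ (z i) ((n:ℝ)⁻¹ • S) + ‖(n:ℝ)⁻¹ • S‖ ^ 2 := by
      intro i
      exact norm_sub_sq_real (z i) ((n:ℝ)⁻¹ • S)
    simp_rw [expand]
    rw [Finset.sum_add_distrib, Finset.sum_sub_distrib, ← Finset.mul_sum, ← sum_inner, hz,
      Finset.sum_const, Finset.card_univ, Fintype.card_fin]
    rw [real_inner_smul_right, real_inner_self_eq_norm_sq]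
    have hns : ‖(n:ℝ)⁻¹ • S‖ = (n:ℝ)⁻¹ * ‖S‖ := by
      rw [norm_smul]
      simp [abs_of_nonneg (inv_nonneg.mpr hn0.le)]
    rw [hns, nsmul_eq_mul, mul_pow]
    field_simp
    ring
  -- B matrix
  set B : Fin n → Fin n → ℝ := fun j k => ∑ i, A i j * A i k with hB
  have hBnn : ∀ j k, 0 ≤ B j k := fun j k =>
    Finset.sum_nonneg fun i _ => mul_nonneg (hpos i j) (hpos i k)
  have hBsymm : ∀ j k, B j k = B k j := fun j k =>
    Finset.sum_congr rfl fun i _ => mul_comm _ _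
  have hBrow : ∀ j, ∑ k, B j k = 1 := by
    intro j
    rw [hB]
    dsimp only
    rw [Finset.sum_comm]
    calc ∑ i, ∑ k, A i j * A i k = ∑ i, A i j * ∑ k, A i k := by
          simp_rw [Finset.mul_sum]
      _ = ∑ i, A i j := by simp_rw [hrow, mul_one]
      _ = 1 := hcol j
  have hBcol : ∀ k, ∑ j, B j k = 1 := by
    intro k
    calc ∑ j, B j k = ∑ j, B k j := by simp_rw [hBsymm]
      _ = 1 := hBrow k
  have hAAB : (A.transpose * A) istar jstar = B istar jstar := by
    simp [Matrix.mul_apply, Matrix.transpose_apply, hB]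
  -- sum of squared norms of y
  have hynorm : ∑ i, ‖y i‖ ^ 2
      = ∑ j, ∑ k, B j k * inner ℝ (x j) (x k) := by
    have : ∀ i, ‖y i‖ ^ 2 = ∑ j, ∑ k, A i j * (A i k * inner ℝ (x j) (x k)) := by
      intro i
      rw [← real_inner_self_eq_norm_sq, hy]
      dsimp only
      rw [sum_inner]
      apply Finset.sum_congr rfl
      intro j _
      rw [real_inner_smul_left, inner_sum, Finset.mul_sum]
      apply Finset.sum_congr rfl
      intro k _
      rw [real_inner_smul_right]
    simp_rw [this]
    rw [Finset.sum_comm]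
    apply Finset.sum_congr rfl
    intro j _
    rw [Finset.sum_comm]
    apply Finset.sum_congr rfl
    intro k _
    rw [hB, Finset.sum_mul]
    apply Finset.sum_congr rfl
    intro i _
    ring
  -- key identity
  have hkey : ∑ j, ∑ k, B j k * inner ℝ (x j) (x k)
      = ∑ j, ‖x j‖ ^ 2 - 2⁻¹ * ∑ j, ∑ k, B j k * ‖x j - x k‖ ^ 2 := by
    have expand : ∀ j k : Fin n, B j k * ‖x j - x k‖ ^ 2
        = B j k * ‖x j‖ ^ 2 + B j k * ‖x k‖ ^ 2 - 2 * (B j k * inner ℝ (x j) (x k)) := by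
      intro j k
      rw [norm_sub_sq_real]
      ring
    have h1 : ∑ j, ∑ k, B j k * ‖x j‖ ^ 2 = ∑ j, ‖x j‖ ^ 2 := by
      apply Finset.sum_congr rfl
      intro j _
      rw [← Finset.sum_mul, hBrow j, one_mul]
    have h2 : ∑ j, ∑ k, B j k * ‖x k‖ ^ 2 = ∑ j, ‖x j‖ ^ 2 := by
      rw [Finset.sum_comm]
      apply Finset.sum_congr rfl
      intro k _
      rw [← Finset.sum_mul, hBcol k, one_mul]
    have hsum : ∑ j, ∑ k, B j k * ‖x j - x k‖ ^ 2
        = ∑ j, ‖x j‖ ^ 2 + ∑ j, ‖x j‖ ^ 2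
          - 2 * ∑ j, ∑ k, B j k * inner ℝ (x j) (x k) := by
      simp_rw [expand]
      simp_rw [Finset.sum_sub_distrib, Finset.sum_add_distrib, ← Finset.mul_sum]
      rw [h1, h2]
    linarith [hsum]
  -- extraction of the star edge
  have hextract : δ * E ^ 2 ≤ 2⁻¹ * ∑ j, ∑ k, B j k * ‖x j - x k‖ ^ 2 := by
    have hδB : δ ≤ B istar jstar := by rw [← hAAB]; exact hAδ
    have hne : (istar, jstar) ≠ (jstar, istar) := by
      intro hcontra
      exact hadj.ne (by simpa using congrArg Prod.fst hcontra)
    have hsub : ({(istar, jstar), (jstar, istar)} : Finset (Fin n × Fin n))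
        ⊆ Finset.univ ×ˢ Finset.univ := by
      intro p _; simp
    have hprod : ∑ j, ∑ k, B j k * ‖x j - x k‖ ^ 2
        = ∑ p ∈ Finset.univ ×ˢ Finset.univ, B p.1 p.2 * ‖x p.1 - x p.2‖ ^ 2 := by
      rw [Finset.sum_product]
    have hps : ∑ p ∈ ({(istar, jstar), (jstar, istar)} : Finset (Fin n × Fin n)),
        B p.1 p.2 * ‖x p.1 - x p.2‖ ^ 2
        = B istar jstar * ‖x istar - x jstar‖ ^ 2
          + B jstar istar * ‖x jstar - x istar‖ ^ 2 :=
      Finset.sum_pair hne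
    have hge : B istar jstar * ‖x istar - x jstar‖ ^ 2
        + B jstar istar * ‖x jstar - x istar‖ ^ 2
        ≤ ∑ p ∈ Finset.univ ×ˢ Finset.univ, B p.1 p.2 * ‖x p.1 - x p.2‖ ^ 2 := by
      rw [← hps]
      apply Finset.sum_le_sum_of_subset_of_nonneg hsub
      intro p _ _
      exact mul_nonneg (hBnn p.1 p.2) (sq_nonneg _)
    rw [hprod]
    have hrev : ‖x jstar - x istar‖ = E := by rw [hE, norm_sub_rev]
    rw [← hE, hrev] at hge
    nlinarith [hge, hBnn jstar istar, sq_nonneg E, (hBsymm istar jstar)]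
  -- step 1 : V y ≤ V x - δ E²
  have hVx : V x = ∑ i, ‖x i‖ ^ 2 - (n:ℝ)⁻¹ * ‖S‖ ^ 2 := hVform x hS.symm
  have hVy : V y = ∑ i, ‖y i‖ ^ 2 - (n:ℝ)⁻¹ * ‖S‖ ^ 2 := hVform y hsumy
  have hstep1 : V y ≤ V x - δ * E ^ 2 := by
    rw [hVx, hVy, hynorm, hkey]
    linarith [hextract]
  -- pair sum identity : ∑∑ ‖x i - x j‖² = 2 n V x
  have hpairsum : ∑ i, ∑ j, ‖x i - x j‖ ^ 2 = 2 * (n:ℝ) * V x := by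
    have expand : ∀ i j : Fin n, ‖x i - x j‖ ^ 2
        = ‖x i‖ ^ 2 - 2 * inner ℝ (x i) (x j) + ‖x j‖ ^ 2 := fun i j =>
      norm_sub_sq_real (x i) (x j)
    have hinner : ∑ i, ∑ j, (inner ℝ (x i) (x j) : ℝ) = ‖S‖ ^ 2 := by
      simp_rw [← inner_sum]
      rw [← sum_inner, hS, real_inner_self_eq_norm_sq]
    have c1 : ∑ i : Fin n, ∑ _j : Fin n, ‖x i‖ ^ 2 = (n:ℝ) * ∑ i, ‖x i‖ ^ 2 := by
      simp_rw [Finset.sum_const, Finset.card_univ, Fintype.card_fin, nsmul_eq_mul,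
        Finset.mul_sum]
    have c2 : ∑ _i : Fin n, ∑ j : Fin n, ‖x j‖ ^ 2 = (n:ℝ) * ∑ j, ‖x j‖ ^ 2 := by
      rw [Finset.sum_const, Finset.card_univ, Fintype.card_fin, nsmul_eq_mul]
    simp_rw [expand]
    simp_rw [Finset.sum_add_distrib, Finset.sum_sub_distrib, ← Finset.mul_sum]
    rw [hinner, c1, c2, hVx]
    have hc : (n:ℝ) * (n:ℝ)⁻¹ = 1 := mul_inv_cancel₀ hnne
    linear_combination 2 * ‖S‖ ^ 2 * hc
  -- bound on V x
  have hVxbound : V x ≤ ((n:ℝ) - 1) / 2 * D ^ 2 * E ^ 2 := by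
    have hterm : ∀ i j : Fin n, ‖x i - x j‖ ^ 2 ≤ (if i = j then 0 else D ^ 2 * E ^ 2) := by
      intro i j
      by_cases hij : i = j
      · simp [hij]
      · simp only [hij, if_false]
        have := hpair i j
        nlinarith [norm_nonneg (x i - x j)]
    have hrowsum : ∀ i : Fin n, ∑ j, (if i = j then (0:ℝ) else D ^ 2 * E ^ 2)
        = ((n:ℝ) - 1) * (D ^ 2 * E ^ 2) := by
      intro i
      have : ∀ j : Fin n, (if i = j then (0:ℝ) else D ^ 2 * E ^ 2)
          = D ^ 2 * E ^ 2 - (if i = j then D ^ 2 * E ^ 2 else 0) := by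
        intro j; by_cases hij : i = j <;> simp [hij]
      simp_rw [this]
      rw [Finset.sum_sub_distrib, Finset.sum_ite_eq]
      simp [Finset.card_univ]
      ring
    have hb : ∑ i, ∑ j, ‖x i - x j‖ ^ 2 ≤ (n:ℝ) * (((n:ℝ) - 1) * (D ^ 2 * E ^ 2)) := by
      calc ∑ i, ∑ j, ‖x i - x j‖ ^ 2
          ≤ ∑ i : Fin n, ∑ j, (if i = j then (0:ℝ) else D ^ 2 * E ^ 2) :=
            Finset.sum_le_sum fun i _ => Finset.sum_le_sum fun j _ => hterm i j
        _ = ∑ i : Fin n, ((n:ℝ) - 1) * (D ^ 2 * E ^ 2) :=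
            Finset.sum_congr rfl fun i _ => hrowsum i
        _ = (n:ℝ) * (((n:ℝ) - 1) * (D ^ 2 * E ^ 2)) := by
            rw [Finset.sum_const, Finset.card_univ, Fintype.card_fin, nsmul_eq_mul]
    rw [hpairsum] at hb
    nlinarith [hb]
  -- conclusion
  have hDpos : (0:ℝ) < ((n:ℝ) - 1) * D ^ 2 := by nlinarith
  have hfinal : 2 * δ / (((n:ℝ) - 1) * D ^ 2) * V x ≤ δ * E ^ 2 := by
    rw [div_mul_eq_mul_div, div_le_iff₀ hDpos]
    calc 2 * δ * V x ≤ 2 * δ * (((n:ℝ) - 1) / 2 * D ^ 2 * E ^ 2) := by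
          apply mul_le_mul_of_nonneg_left hVxbound (by linarith)
      _ = δ * E ^ 2 * (((n:ℝ) - 1) * D ^ 2) := by ring
  have : V y ≤ (1 - 2 * δ / (((n:ℝ) - 1) * D ^ 2)) * V x := by
    have h := hstep1
    nlinarith [hfinal]
  simpa [hy] using this
end
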